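/- arXiv:1506.03883 — 3 statements merged into one kernel-verified Lean document; each statement's English description precedes it below -/
import Mathlib

section
/- For every finite game graph G with n players and |V| positions, there exists a deterministic Büchi automaton over alphabet V with at most |V|·2^{2n²|V|²} states such that, for every infinite word π ∈ V^ω that is a play of G, the automaton accepts π if and only if the play π yields recurring hierarchical information. -/
/-- A finite game graph for `n` players: positions `V` with initial position `init`,
action sets `A i`, observation sets `B i`, a move relation labelled by action
profiles (with no dead ends), and observation functions. -/
structure GameGraph (n : ℕ) (V : Type) (A : Fin n → Type) (B : Fin n → Type) where
  init : V
  move : V → (∀ i, A i) → V → Prop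
  noDeadEnd : ∀ v a, ∃ w, move v a w
  obs : ∀ i : Fin n, V → B i

/-- A Moore machine with finite state set `Q`, input alphabet `σ`, output alphabet `γ`. -/
structure Moore (σ γ : Type) where
  Q : Type
  finQ : Fintype Q
  q0 : Q
  δ : Q → σ → Q
  out : Q → γ

namespace Moore

/-- The output letter of a Moore machine after reading a word. -/
def output {σ γ : Type} (mc : Moore σ γ) (w : List σ) : γ :=
  mc.out (w.foldl mc.δ mc.q0)

/-- The output word of a Moore machine along a word: the `k`-th letter is the
output after reading the prefix of length `k+1`. -/
def outWord {σ γ : Type} (mc : Moore σ γ) (w : List σ) : List γ :=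
  ((w.scanl mc.δ mc.q0).drop 1).map mc.out

end Moore

/-- A deterministic parity automaton over alphabet `α`. -/
structure ParityAut (α : Type) where
  Q : Type
  finQ : Fintype Q
  q0 : Q
  δ : Q → α → Q
  prio : Q → ℕ

namespace ParityAut

/-- The run of a deterministic parity automaton on an infinite word. -/
def run {α : Type} (d : ParityAut α) (f : ℕ → α) : ℕ → d.Q
  | 0 => d.q0
  | t + 1 => d.δ (run d f t) (f t)

/-- Parity acceptance: the least priority occurring infinitely often is even. -/
def Accepts {α : Type} (d : ParityAut α) (f : ℕ → α) : Prop :=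
  Even (sInf { p | ∃ᶠ t in Filter.atTop, d.prio (d.run f t) = p })

end ParityAut

/-- A deterministic Büchi automaton over alphabet `α` with state set `σ`. -/
structure DetBuchi (α σ : Type) where
  q0 : σ
  δ : σ → α → σ
  accept : Set σ

namespace DetBuchi

/-- The run of a deterministic Büchi automaton on an infinite word. -/
def run {α σ : Type} (d : DetBuchi α σ) (f : ℕ → α) : ℕ → σ
  | 0 => d.q0
  | t + 1 => d.δ (run d f t) (f t)

/-- Büchi acceptance: the run visits accepting states infinitely often. -/
def Accepts {α σ : Type} (d : DetBuchi α σ) (f : ℕ → α) : Prop :=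
  ∃ᶠ t in Filter.atTop, d.run f t ∈ d.accept

end DetBuchi

namespace GameGraph

variable {n : ℕ} {V : Type} {A B : Fin n → Type}

/-- Two positions are linked by a move (for some action profile). -/
def step (G : GameGraph n V A B) (u w : V) : Prop := ∃ a, G.move u a w

/-- A history: a nonempty sequence starting at the initial position, each
consecutive pair lying on a move. -/
def IsHistory (G : GameGraph n V A B) (π : List V) : Prop :=
  π.head? = some G.init ∧ π.Chain' G.step

/-- The observation sequence of player `i` along a history (the observation at
the initial position is discarded). -/
def obsSeq (G : GameGraph n V A B) (i : Fin n) (π : List V) : List (B i) :=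
  (π.drop 1).map (G.obs i)

/-- Histories are indistinguishable for player `i` if they yield the same observations. -/
def Indist (G : GameGraph n V A B) (i : Fin n) (π π' : List V) : Prop :=
  G.obsSeq i π = G.obsSeq i π'

/-- The information set of player `i` at history `π`. -/
def InfoSet (G : GameGraph n V A B) (i : Fin n) (π : List V) : Set (List V) :=
  { π' | G.IsHistory π' ∧ G.Indist i π π' }

/-- A history yields hierarchical information if the information sets of players
are totally ordered by inclusion. -/
def HistHI (G : GameGraph n V A B) (π : List V) : Prop :=
  ∀ i j : Fin n, G.InfoSet i π ⊆ G.InfoSet j π ∨ G.InfoSet j π ⊆ G.InfoSet i π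

/-- Static hierarchical information: there is a total order of the players such
that along every history, the information sets respect this order. -/
def StaticHI (G : GameGraph n V A B) : Prop :=
  ∃ ord : Fin n → Fin n → Prop, IsLinearOrder (Fin n) ord ∧
    ∀ i j : Fin n, ord i j → ∀ π, G.IsHistory π → G.InfoSet i π ⊆ G.InfoSet j π

/-- Hierarchical observation: there is a total order of the players such that
the observation of a smaller player determines that of a bigger player, positionally. -/
def HierObs (G : GameGraph n V A B) : Prop :=
  ∃ ord : Fin n → Fin n → Prop, IsLinearOrder (Fin n) ord ∧
    ∀ i j : Fin n, ord i j → ∀ v v' : V, G.obs i v = G.obs i v' → G.obs j v = G.obs j v'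

/-- Dynamic hierarchical information: every history yields hierarchical information. -/
def DynamicHI (G : GameGraph n V A B) : Prop := ∀ π, G.IsHistory π → G.HistHI π

/-- The prefix `v₀ … v_t` of a play, as a list. -/
def playPrefix (f : ℕ → V) (t : ℕ) : List V := (List.range (t + 1)).map f

/-- A play: an infinite sequence all of whose prefixes are histories. -/
def IsPlay (G : GameGraph n V A B) (f : ℕ → V) : Prop :=
  ∀ t, G.IsHistory (playPrefix f t)

/-- A play yields recurring hierarchical information if infinitely many of its
prefix histories yield hierarchical information. -/
def PlayRecurringHI (G : GameGraph n V A B) (f : ℕ → V) : Prop :=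
  ∀ T, ∃ t, T ≤ t ∧ G.HistHI (playPrefix f t)

/-- A game yields recurring hierarchical information if every play does. -/
def RecurringHI (G : GameGraph n V A B) : Prop :=
  ∀ f, G.IsPlay f → G.PlayRecurringHI f

/-- `[t, t+ℓ]` is a gap of the play `f`: no prefix of length `r ∈ [t, t+ℓ]` yields
hierarchical information.  The length of this gap is `ℓ + 1`. -/
def IsGap (G : GameGraph n V A B) (f : ℕ → V) (t ℓ : ℕ) : Prop :=
  ∀ r, t ≤ r → r ≤ t + ℓ → ¬ G.HistHI (playPrefix f r)

/-- Information-consistency of a strategy profile: each component is constant on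
indistinguishability classes of histories. -/
def Consistent (G : GameGraph n V A B) (s : ∀ i, List V → A i) : Prop :=
  ∀ (i : Fin n) (π π' : List V),
    G.IsHistory π → G.IsHistory π' → G.Indist i π π' → s i π = s i π'

/-- A play follows a strategy profile. -/
def Follows (G : GameGraph n V A B) (s : ∀ i, List V → A i) (f : ℕ → V) : Prop :=
  f 0 = G.init ∧ ∀ t, ∃ a, G.move (f t) a (f (t + 1)) ∧ ∀ i, a i = s i (playPrefix f t)

/-- A distributed winning strategy for winning condition `W`: an information-consistent
profile all of whose outcomes lie in `W`. -/
def WinningProfile (G : GameGraph n V A B) (W : Set (ℕ → V)) (s : ∀ i, List V → A i) : Prop :=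
  G.Consistent s ∧ ∀ f, G.Follows s f → f ∈ W

/-- A finite-state strategy for player `i`: implemented by a Moore machine reading
the observation sequence of the history. -/
def FinStateStrategy (G : GameGraph n V A B) (i : Fin n) (si : List V → A i) : Prop :=
  ∃ mc : Moore (B i) (A i), ∀ π, G.IsHistory π → si π = mc.output (G.obsSeq i π)

/-- The game admits a distributed winning strategy for `W`. -/
def HasDWS (G : GameGraph n V A B) (W : Set (ℕ → V)) : Prop :=
  ∃ s : ∀ i, List V → A i, G.WinningProfile W s

/-- The game admits a finite-state distributed winning strategy for `W`. -/
def HasFinDWS (G : GameGraph n V A B) (W : Set (ℕ → V)) : Prop :=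
  ∃ s : ∀ i, List V → A i, G.WinningProfile W s ∧ ∀ i, G.FinStateStrategy i (s i)

/-- `i ⪯_π j` : at history `π`, player `i` is at least as informed as player `j`. -/
def infoLE (G : GameGraph n V A B) (π : List V) (i j : Fin n) : Prop :=
  G.InfoSet i π ⊆ G.InfoSet j π

/-- The information rank of player `i` at history `π`: the number of players `j`
with `j ≺_π i`, or with `j < i` and `j ≈_π i`. -/
noncomputable def rank (G : GameGraph n V A B) (i : Fin n) (π : List V) : ℕ :=
  Nat.card {j : Fin n //
    (G.infoLE π j i ∧ ¬ G.infoLE π i j) ∨ (j < i ∧ G.infoLE π j i ∧ G.infoLE π i j)}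

/-- The signal `λ_j^i`: the set of observations of player `i` at the last positions of
histories in the information set of player `j`. -/
def lam (G : GameGraph n V A B) (i j : Fin n) (π : List V) : Set (B i) :=
  { b | ∃ π', π' ∈ G.InfoSet j π ∧ ∃ v, π'.getLast? = some v ∧ G.obs i v = b }

/-- Players `i` and `j` cross at stage `ℓ` of the play `f`. -/
def Crossing (G : GameGraph n V A B) (f : ℕ → V) (ℓ : ℕ) (i j : Fin n) : Prop :=
  G.InfoSet i (playPrefix f ℓ) ⊂ G.InfoSet j (playPrefix f ℓ) ∧
  G.InfoSet j (playPrefix f (ℓ + 1)) ⊂ G.InfoSet i (playPrefix f (ℓ + 1))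

/-- A game is cross-free if no two players cross at any stage of any play. -/
def CrossFree (G : GameGraph n V A B) : Prop :=
  ∀ f, G.IsPlay f → ∀ (ℓ : ℕ) (i j : Fin n), ¬ G.Crossing f ℓ i j

end GameGraph

open Classical

namespace GameGraph
variable {n : ℕ} {V : Type} {A B : Fin n → Type}

/-- semantic set tracked by the automaton -/
def Sem (G : GameGraph n V A B) (π : List V) (i j : Fin n) (v : V) (b : Bool) : Prop :=
  ∃ π', G.IsHistory π' ∧ G.Indist i π π' ∧ π'.getLast? = some v ∧
    (b = true ↔ G.Indist j π π')

lemma IsHistory.ne_nil {G : GameGraph n V A B} {π : List V} (h : G.IsHistory π) : π ≠ [] := by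
  rintro rfl; simp [IsHistory] at h

lemma obsSeq_concat (G : GameGraph n V A B) (i : Fin n) (π : List V) (hπ : π ≠ []) (w : V) :
    G.obsSeq i (π ++ [w]) = G.obsSeq i π ++ [G.obs i w] := by
  unfold obsSeq
  rw [List.drop_append_of_le_length, List.map_append]
  · simp
  · exact Nat.one_le_iff_ne_zero.mpr (by simpa using hπ)

lemma length_eq_of_indist {G : GameGraph n V A B} {i : Fin n} {π π' : List V}
    (h : G.Indist i π π') : π.length - 1 = π'.length - 1 := by
  have := congrArg List.length h
  simpa [obsSeq] using this

/-- inclusion of information sets via Sem -/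
lemma infoSubset_iff (G : GameGraph n V A B) (π : List V) (i j : Fin n) :
    G.InfoSet i π ⊆ G.InfoSet j π ↔ ∀ v b, G.Sem π i j v b → b = true := by
  constructor
  · rintro hsub v b ⟨π', hH, hI, hlast, hb⟩
    have : π' ∈ G.InfoSet j π := hsub ⟨hH, hI⟩
    exact hb.mpr this.2
  · rintro h π' ⟨hH, hI⟩
    have hne : π' ≠ [] := hH.ne_nil
    obtain ⟨v, hv⟩ : ∃ v, π'.getLast? = some v :=
      ⟨π'.getLast hne, List.getLast?_eq_getLast hne⟩
    by_cases hj : G.Indist j π π'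
    · exact ⟨hH, hj⟩
    · have : (false : Bool) = true := h v false ⟨π', hH, hI, hv, by simp [hj]⟩
      simp at this

lemma histHI_iff_sem (G : GameGraph n V A B) (π : List V) :
    G.HistHI π ↔ ∀ i j : Fin n,
      (∀ v b, G.Sem π i j v b → b = true) ∨ (∀ v b, G.Sem π j i v b → b = true) := by
  unfold HistHI
  simp only [infoSubset_iff]

end GameGraph
namespace GameGraph
variable {n : ℕ} {V : Type} {A B : Fin n → Type}

lemma isHistory_singleton (G : GameGraph n V A B) : G.IsHistory [G.init] := by
  exact ⟨rfl, List.isChain_singleton _⟩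

lemma indist_nil (G : GameGraph n V A B) (i : Fin n) (w w' : V) :
    G.Indist i [w] [w'] := by simp [Indist, obsSeq]

lemma sem_init (G : GameGraph n V A B) (w : V) (i j : Fin n) (v : V) (b : Bool) :
    G.Sem [w] i j v b ↔ (v = G.init ∧ b = true) := by
  constructor
  · rintro ⟨π', hH, hI, hlast, hb⟩
    have h1 := length_eq_of_indist hI
    have hne := hH.ne_nil
    have hlen : π'.length = 1 := by
      simp at h1
      have : 0 < π'.length := List.length_pos_iff.mpr hne
      omega
    obtain ⟨x, rfl⟩ := List.length_eq_one_iff.mp hlen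
    have hx : x = G.init := by
      have := hH.1; simpa using this
    subst hx
    refine ⟨by simpa using hlast.symm, hb.mpr (G.indist_nil j w G.init)⟩
  · rintro ⟨rfl, rfl⟩
    exact ⟨[G.init], G.isHistory_singleton, G.indist_nil i w G.init, by simp,
      by simp [G.indist_nil j w G.init]⟩

end GameGraph
namespace GameGraph
variable {n : ℕ} {V : Type} {A B : Fin n → Type}

lemma indist_concat (G : GameGraph n V A B) (i : Fin n) {π π' : List V}
    (h : π ≠ []) (h' : π' ≠ []) (w w' : V) :
    G.Indist i (π ++ [w]) (π' ++ [w']) ↔ G.Indist i π π' ∧ G.obs i w = G.obs i w' := by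
  unfold Indist
  rw [G.obsSeq_concat i π h w, G.obsSeq_concat i π' h' w']
  constructor
  · intro hh
    have := List.append_inj' hh (by simp)
    simpa using this
  · rintro ⟨h1, h2⟩; rw [h1, h2]

lemma isHistory_concat (G : GameGraph n V A B) {π : List V} (h : π ≠ []) (w : V) :
    G.IsHistory (π ++ [w]) ↔ G.IsHistory π ∧ ∃ u, π.getLast? = some u ∧ G.step u w := by
  unfold IsHistory List.Chain'
  rw [List.isChain_append, List.head?_append]
  obtain ⟨a, l, rfl⟩ := List.exists_cons_of_ne_nil h
  simp only [List.head?_cons, Option.or_some, List.isChain_singleton, List.head?_singleton]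
  constructor
  · rintro ⟨h1, h2, h3, h4⟩
    refine ⟨⟨h1, h2⟩, ?_⟩
    obtain ⟨u, hu⟩ : ∃ u, (a :: l).getLast? = some u :=
      ⟨_, List.getLast?_eq_getLast (by simp)⟩
    exact ⟨u, hu, h4 u hu w rfl⟩
  · rintro ⟨⟨h1, h2⟩, u, hu, hs⟩
    refine ⟨h1, h2, trivial, ?_⟩
    intro x hx y hy
    simp only [hu, Option.mem_def, Option.some.injEq] at hx
    simp only [Option.mem_def, Option.some.injEq] at hy
    subst hx; subst hy; exact hs

lemma sem_step (G : GameGraph n V A B) {π : List V} (hπ : π ≠ []) (w : V)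
    (i j : Fin n) (v' : V) (b' : Bool) :
    G.Sem (π ++ [w]) i j v' b' ↔ ∃ v b, G.Sem π i j v b ∧ G.step v v' ∧
      G.obs i v' = G.obs i w ∧ (b' = true ↔ (b = true ∧ G.obs j v' = G.obs j w)) := by
  constructor
  · rintro ⟨π'', hH, hI, hlast, hb⟩
    have hlen : π''.length = π.length + 1 := by
      have h1 := length_eq_of_indist hI
      have := List.length_pos_iff.mpr hπ
      have h2 := List.length_pos_iff.mpr hH.ne_nil
      simp at h1; omega
    obtain ⟨π₀, x, rfl⟩ : ∃ L b, π'' = L ++ [b] := by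
      rcases List.eq_nil_or_concat π'' with h | h
      · exact absurd h hH.ne_nil
      · simpa [List.concat_eq_append] using h
    have hπ₀ : π₀ ≠ [] := by
      rintro rfl
      simp only [List.nil_append, List.length_singleton] at hlen
      exact hπ (List.length_eq_zero_iff.mp (by omega))
    have hx : v' = x := by
      rw [List.getLast?_concat] at hlast
      have : x = v' := by simpa using hlast
      exact this.symm
    subst hx
    rw [G.isHistory_concat hπ₀ v'] at hH
    obtain ⟨hH0, u, hu, hstep⟩ := hH
    rw [G.indist_concat i hπ hπ₀ w v'] at hI
    refine ⟨u, if G.Indist j π π₀ then true else false,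
      ⟨π₀, hH0, hI.1, hu, by split <;> simp_all⟩, hstep, hI.2.symm, ?_⟩
    rw [hb, G.indist_concat j hπ hπ₀ w v']
    constructor
    · rintro ⟨h1, h2⟩; exact ⟨by simp [h1], h2.symm⟩
    · rintro ⟨h1, h2⟩
      refine ⟨?_, h2.symm⟩
      by_cases hc : G.Indist j π π₀ <;> simp_all
  · rintro ⟨v, b, ⟨π₀, hH0, hI0, hlast0, hb0⟩, hstep, hobs, hb'⟩
    have hπ₀ : π₀ ≠ [] := hH0.ne_nil
    refine ⟨π₀ ++ [v'], ?_, ?_, List.getLast?_concat, ?_⟩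
    · exact (G.isHistory_concat hπ₀ v').mpr ⟨hH0, v, hlast0, hstep⟩
    · exact (G.indist_concat i hπ hπ₀ w v').mpr ⟨hI0, hobs.symm⟩
    · rw [hb', G.indist_concat j hπ hπ₀ w v']
      rw [hb0]
      exact ⟨fun ⟨a, c⟩ => ⟨a, c.symm⟩, fun ⟨a, c⟩ => ⟨a, c.symm⟩⟩

end GameGraph
namespace GameGraph
variable {n : ℕ} {V : Type} {A B : Fin n → Type}

/-- Boolean state of the subset automaton. -/
noncomputable def stateOf (G : GameGraph n V A B) (π : List V) :
    Fin n → Fin n → V → Bool → Bool :=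
  fun i j v b => @decide (G.Sem π i j v b) (Classical.dec _)

lemma stateOf_eq_true (G : GameGraph n V A B) (π : List V) (i j : Fin n) (v : V) (b : Bool) :
    G.stateOf π i j v b = true ↔ G.Sem π i j v b := by
  simp [stateOf]

/-- Transition function of the subset automaton. -/
noncomputable def autDelta (G : GameGraph n V A B)
    (S : Fin n → Fin n → V → Bool → Bool) (w : V) : Fin n → Fin n → V → Bool → Bool :=
  @dite _ (S = fun _ _ _ _ => false) (Classical.dec _)
    (fun _ => fun _ _ v b => @decide (v = G.init ∧ b = true) (Classical.dec _))
    (fun _ => fun i j v' b' => @decide (∃ v b, S i j v b = true ∧ G.step v v' ∧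
        G.obs i v' = G.obs i w ∧ (b' = true ↔ (b = true ∧ G.obs j v' = G.obs j w)))
      (Classical.dec _))

lemma stateOf_ne_empty (G : GameGraph n V A B) (hn : 0 < n) {π : List V}
    (hH : G.IsHistory π) : G.stateOf π ≠ fun _ _ _ _ => false := by
  intro h
  set i : Fin n := ⟨0, hn⟩
  have hsem : G.Sem π i i (π.getLast hH.ne_nil) true :=
    ⟨π, hH, rfl, List.getLast?_eq_getLast hH.ne_nil, by simp [Indist]⟩
  have h2 : G.stateOf π i i (π.getLast hH.ne_nil) true = true :=
    (G.stateOf_eq_true π i i _ true).mpr hsem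
  rw [h] at h2
  simp at h2

lemma autDelta_empty (G : GameGraph n V A B) (w : V) :
    G.autDelta (fun _ _ _ _ => false) w = G.stateOf [w] := by
  unfold autDelta
  rw [dif_pos rfl]
  funext i j v b
  simp only [stateOf]
  rw [decide_eq_decide]
  exact (G.sem_init w i j v b).symm

lemma autDelta_stateOf (G : GameGraph n V A B) (hn : 0 < n) {π : List V}
    (hH : G.IsHistory π) (w : V) :
    G.autDelta (G.stateOf π) w = G.stateOf (π ++ [w]) := by
  unfold autDelta
  rw [dif_neg (G.stateOf_ne_empty hn hH)]
  funext i j v' b'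
  simp only [stateOf]
  apply decide_eq_decide.mpr
  rw [G.sem_step hH.ne_nil w i j v' b']
  constructor
  · rintro ⟨v, b, h1, h2⟩
    exact ⟨v, b, (G.stateOf_eq_true π i j v b).mp h1, h2⟩
  · rintro ⟨v, b, h1, h2⟩
    exact ⟨v, b, (G.stateOf_eq_true π i j v b).mpr h1, h2⟩

/-- Accepting states: those encoding a totally ordered family of information sets. -/
def accSt (G : GameGraph n V A B) : Set (Fin n → Fin n → V → Bool → Bool) :=
  { S | ∀ i j : Fin n, (∀ v b, S i j v b = true → b = true) ∨
      (∀ v b, S j i v b = true → b = true) }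

lemma stateOf_mem_accSt (G : GameGraph n V A B) (π : List V) :
    G.stateOf π ∈ G.accSt ↔ G.HistHI π := by
  rw [G.histHI_iff_sem]
  unfold accSt
  constructor
  · intro h i j
    rcases h i j with h' | h'
    · exact Or.inl fun v b hs => h' v b ((G.stateOf_eq_true π i j v b).mpr hs)
    · exact Or.inr fun v b hs => h' v b ((G.stateOf_eq_true π j i v b).mpr hs)
  · intro h i j
    rcases h i j with h' | h'
    · exact Or.inl fun v b hs => h' v b ((G.stateOf_eq_true π i j v b).mp hs)
    · exact Or.inr fun v b hs => h' v b ((G.stateOf_eq_true π j i v b).mp hs)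

lemma playPrefix_zero (f : ℕ → V) : playPrefix f 0 = [f 0] := by
  simp [playPrefix, List.range_succ]

lemma playPrefix_succ (f : ℕ → V) (t : ℕ) :
    playPrefix f (t + 1) = playPrefix f t ++ [f (t + 1)] := by
  unfold playPrefix
  rw [List.range_succ, List.map_append]
  simp

end GameGraph
namespace GameGraph
variable {n : ℕ} {V : Type} {A B : Fin n → Type}

/-- The subset Büchi automaton over the boolean state type. -/
noncomputable def subsetAut (G : GameGraph n V A B) :
    DetBuchi V (Fin n → Fin n → V → Bool → Bool) :=
  ⟨fun _ _ _ _ => false, G.autDelta, G.accSt⟩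

lemma subsetAut_run (G : GameGraph n V A B) (hn : 0 < n) {f : ℕ → V}
    (hf : G.IsPlay f) : ∀ t, (G.subsetAut).run f (t + 1) = G.stateOf (playPrefix f t) := by
  intro t
  induction t with
  | zero =>
      show G.autDelta ((G.subsetAut).run f 0) (f 0) = _
      rw [playPrefix_zero]
      exact G.autDelta_empty (f 0)
  | succ t ih =>
      show G.autDelta ((G.subsetAut).run f (t + 1)) (f (t + 1)) = _
      rw [ih, playPrefix_succ]
      exact G.autDelta_stateOf hn (hf t) (f (t + 1))

lemma subsetAut_spec (G : GameGraph n V A B) (hn : 0 < n) {f : ℕ → V}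
    (hf : G.IsPlay f) : (G.subsetAut).Accepts f ↔ G.PlayRecurringHI f := by
  rw [DetBuchi.Accepts, Filter.frequently_atTop]
  constructor
  · intro h T
    obtain ⟨t, ht, hacc⟩ := h (T + 1)
    obtain ⟨s, rfl⟩ : ∃ s, t = s + 1 := ⟨t - 1, by omega⟩
    rw [G.subsetAut_run hn hf s] at hacc
    exact ⟨s, by omega, (G.stateOf_mem_accSt _).mp hacc⟩
  · intro h T
    obtain ⟨t, ht, hHI⟩ := h T
    refine ⟨t + 1, by omega, ?_⟩
    rw [G.subsetAut_run hn hf t]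
    exact (G.stateOf_mem_accSt _).mpr hHI

end GameGraph

theorem statement12_aux {n : ℕ} {V : Type} {A B : Fin n → Type}
    [Fintype V] [∀ i, Fintype (A i)] [∀ i, Fintype (B i)]
    (G : GameGraph n V A B) :
    ∃ (m : ℕ) (aut : DetBuchi V (Fin m)),
      m ≤ Fintype.card V * 2 ^ (2 * n ^ 2 * Fintype.card V ^ 2) ∧
      ∀ f : ℕ → V, G.IsPlay f → (aut.Accepts f ↔ G.PlayRecurringHI f) := by
  haveI : Nonempty V := ⟨G.init⟩
  have hV : 1 ≤ Fintype.card V := Fintype.card_pos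
  rcases Nat.eq_zero_or_pos n with hn | hn
  · -- trivial case: no players, everything is hierarchical
    refine ⟨1, ⟨0, fun _ _ => 0, Set.univ⟩, le_trans hV (Nat.le_mul_of_pos_right _ (pow_pos (by norm_num) _)), fun f hf => ?_⟩
    constructor
    · intro _ T
      refine ⟨T, le_refl T, fun i j => ?_⟩
      exact absurd (i.2) (by omega)
    · intro _
      rw [DetBuchi.Accepts, Filter.frequently_atTop]
      intro a; exact ⟨a, le_refl a, Set.mem_univ _⟩
  · -- main case
    let St := (Fin n → Fin n → V → Bool → Bool)
    let e : St ≃ Fin (Fintype.card St) := Fintype.equivFin St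
    refine ⟨Fintype.card St, ⟨e (G.subsetAut).q0,
      fun q v => e ((G.subsetAut).δ (e.symm q) v), {q | e.symm q ∈ (G.subsetAut).accept}⟩,
      ?_, fun f hf => ?_⟩
    · -- cardinality bound
      have hcard : Fintype.card St = 2 ^ (2 * (n * n) * Fintype.card V) := by
        show Fintype.card (Fin n → Fin n → V → Bool → Bool) = _
        simp only [Fintype.card_fun, Fintype.card_bool, Fintype.card_fin]
        rw [← pow_mul, ← pow_mul, ← pow_mul]
        ring_nf
      rw [hcard]
      calc 2 ^ (2 * (n * n) * Fintype.card V)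
          ≤ 2 ^ (2 * n ^ 2 * Fintype.card V ^ 2) := by
            apply Nat.pow_le_pow_right (by norm_num)
            have : Fintype.card V ≤ Fintype.card V ^ 2 := by nlinarith
            nlinarith
        _ ≤ Fintype.card V * 2 ^ (2 * n ^ 2 * Fintype.card V ^ 2) :=
            Nat.le_mul_of_pos_left _ hV
    · -- acceptance equivalence, via the equivalence with the subset automaton
      have hrun : ∀ t, DetBuchi.run ⟨e (G.subsetAut).q0,
          fun q v => e ((G.subsetAut).δ (e.symm q) v), {q | e.symm q ∈ (G.subsetAut).accept}⟩ f t
          = e ((G.subsetAut).run f t) := by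
        intro t
        induction t with
        | zero => rfl
        | succ t ih => show e (_) = _ ; rw [ih]; simp [DetBuchi.run]
      rw [← G.subsetAut_spec hn hf]
      unfold DetBuchi.Accepts
      apply Filter.frequently_congr
      apply Filter.Eventually.of_forall
      intro t
      rw [hrun t]
      simp

/-- For every finite game graph with `n` players and `|V|` positions there
is a deterministic Büchi automaton over alphabet `V` with at most `|V| · 2^(2n²|V|²)` states
that accepts exactly those plays that yield recurring hierarchical information. -/
theorem statement12 {n : ℕ} {V : Type} {A B : Fin n → Type}
    [Fintype V] [∀ i, Fintype (A i)] [∀ i, Fintype (B i)]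
    (G : GameGraph n V A B) :
    ∃ (m : ℕ) (aut : DetBuchi V (Fin m)),
      m ≤ Fintype.card V * 2 ^ (2 * n ^ 2 * Fintype.card V ^ 2) ∧
      ∀ f : ℕ → V, G.IsPlay f → (aut.Accepts f ↔ G.PlayRecurringHI f) :=
  statement12_aux G
end

section
/- A finite game graph G yields recurring hierarchical information if, and only if, there exists a natural number k such that every gap of every play of G has length at most k (i.e., G has finite gap size). -/
section Statement14Aux

open GameGraph

variable {n : ℕ} {V : Type} {A B : Fin n → Type}

/-- Finite "knowledge state" of a history. -/
def S14State (n : ℕ) (V : Type) : Type :=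
  Option V × (Fin n → Fin n → V → Prop → Prop)

instance s14finite [Fintype V] : Finite (S14State n V) := by
  unfold S14State; infer_instance

def s14st (G : GameGraph n V A B) (π : List V) : S14State n V :=
  (π.getLast?, fun i j v' e => ∃ π', G.IsHistory π' ∧ G.obsSeq i π' = G.obsSeq i π ∧
    π'.getLast? = some v' ∧ (e ↔ G.obsSeq j π' = G.obsSeq j π))

def s14P (s : S14State n V) : Prop :=
  ∀ i j : Fin n, (∀ v', ¬ s.2 i j v' False) ∨ (∀ v', ¬ s.2 j i v' False)

lemma s14_hist_ne_nil {G : GameGraph n V A B} {π : List V} (h : G.IsHistory π) : π ≠ [] := by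
  rintro rfl
  simp [GameGraph.IsHistory] at h

lemma s14_obsSeq_snoc (G : GameGraph n V A B) (i : Fin n) {π : List V} (hπ : π ≠ []) (u : V) :
    G.obsSeq i (π ++ [u]) = G.obsSeq i π ++ [G.obs i u] := by
  cases π with
  | nil => simp at hπ
  | cons x xs => simp [GameGraph.obsSeq]

lemma s14_obsSeq_length (G : GameGraph n V A B) (i : Fin n) (π : List V) :
    (G.obsSeq i π).length = π.length - 1 := by
  simp [GameGraph.obsSeq]

lemma s14_hist_snoc (G : GameGraph n V A B) {π : List V} (hπ : π ≠ []) (u : V) :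
    G.IsHistory (π ++ [u]) ↔ G.IsHistory π ∧ ∃ v, π.getLast? = some v ∧ G.step v u := by
  obtain ⟨v, hv⟩ := List.getLast?_isSome.mpr hπ |> Option.isSome_iff_exists.mp
  unfold GameGraph.IsHistory
  simp only [List.Chain', List.isChain_append]
  cases π with
  | nil => simp at hπ
  | cons x xs =>
    simp only [List.cons_append, List.head?_cons]
    constructor
    · rintro ⟨h1, h2, _, h3⟩
      exact ⟨⟨h1, h2⟩, v, hv, h3 v hv u rfl⟩
    · rintro ⟨⟨h1, h2⟩, w, hw, hst⟩
      refine ⟨h1, h2, List.isChain_singleton u, ?_⟩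
      rintro x' hx' y hy
      rw [hv] at hx'; cases hx'
      rw [hw] at hv; cases hv
      cases hy
      exact hst

lemma s14_infoLE_iff (G : GameGraph n V A B) (π : List V) (i j : Fin n) :
    G.InfoSet i π ⊆ G.InfoSet j π ↔ ∀ v', ¬ (s14st G π).2 i j v' False := by
  constructor
  · intro h v' ⟨π', hπ', hobs, _, hflag⟩
    have : π' ∈ G.InfoSet i π := ⟨hπ', hobs.symm⟩
    exact hflag.mpr ((h this).2.symm) |>.elim
  · rintro h π' ⟨hπ', hobs⟩
    obtain ⟨v', hv'⟩ := Option.isSome_iff_exists.mp (List.getLast?_isSome.mpr (s14_hist_ne_nil hπ'))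
    refine ⟨hπ', ?_⟩
    by_contra hne
    exact h v' ⟨π', hπ', hobs.symm, hv', iff_of_false id (fun hh => hne hh.symm)⟩

lemma s14_histHI_iff (G : GameGraph n V A B) (π : List V) :
    G.HistHI π ↔ s14P (s14st G π) := by
  unfold GameGraph.HistHI s14P
  refine forall_congr' fun i => forall_congr' fun j => ?_
  rw [s14_infoLE_iff, s14_infoLE_iff]

lemma s14_snoc_eq_snoc {α : Type*} {l₁ l₂ : List α} {a b : α} :
    l₁ ++ [a] = l₂ ++ [b] ↔ l₁ = l₂ ∧ a = b := by
  constructor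
  · intro h
    have := List.append_inj' h (by simp)
    simpa using this
  · rintro ⟨rfl, rfl⟩; rfl

lemma s14_st_snoc_iff (G : GameGraph n V A B) {π : List V} (hπ : π ≠ []) (w : V)
    (i j : Fin n) (u' : V) (e : Prop) :
    (s14st G (π ++ [w])).2 i j u' e ↔
      ∃ (v' : V) (e₀ : Prop), (s14st G π).2 i j v' e₀ ∧ G.step v' u' ∧
        G.obs i u' = G.obs i w ∧ (e ↔ (e₀ ∧ G.obs j u' = G.obs j w)) := by
  constructor
  · rintro ⟨π'', hh, hobs, hlast, hflag⟩
    rcases π''.eq_nil_or_concat' with rfl | ⟨ρ, u, rfl⟩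
    · exact absurd rfl (s14_hist_ne_nil hh)
    have hρne : ρ ≠ [] := by
      have hlen := congrArg List.length hobs
      rw [s14_obsSeq_length, s14_obsSeq_length] at hlen
      simp only [List.length_append, List.length_cons, List.length_nil] at hlen
      have hπl : 0 < π.length := List.length_pos_iff.mpr hπ
      intro hρ
      rw [hρ] at hlen
      simp at hlen
      omega
    rw [s14_obsSeq_snoc G i hρne, s14_obsSeq_snoc G i hπ] at hobs
    obtain ⟨hobs1, hobs2⟩ := s14_snoc_eq_snoc.mp hobs
    rw [List.getLast?_concat] at hlast
    cases hlast
    obtain ⟨hρh, v', hv', hst⟩ := (s14_hist_snoc G hρne u').mp hh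
    refine ⟨v', G.obsSeq j ρ = G.obsSeq j π, ⟨ρ, hρh, hobs1, hv', Iff.rfl⟩, hst, hobs2, ?_⟩
    rw [s14_obsSeq_snoc G j hρne, s14_obsSeq_snoc G j hπ] at hflag
    rw [hflag, s14_snoc_eq_snoc]
  · rintro ⟨v', e₀, ⟨π', hπ'h, hobs1, hlast', hflag0⟩, hst, hobsw, hflag⟩
    have hπ'ne : π' ≠ [] := s14_hist_ne_nil hπ'h
    refine ⟨π' ++ [u'], ?_, ?_, ?_, ?_⟩
    · exact (s14_hist_snoc G hπ'ne u').mpr ⟨hπ'h, v', hlast', hst⟩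
    · rw [s14_obsSeq_snoc G i hπ'ne, s14_obsSeq_snoc G i hπ, hobs1, hobsw]
    · exact List.getLast?_concat
    · rw [s14_obsSeq_snoc G j hπ'ne, s14_obsSeq_snoc G j hπ, s14_snoc_eq_snoc, hflag, hflag0]

lemma s14_st_snoc (G : GameGraph n V A B) {π σ : List V} (hπ : π ≠ []) (hσ : σ ≠ [])
    (h : s14st G π = s14st G σ) (w : V) :
    s14st G (π ++ [w]) = s14st G (σ ++ [w]) := by
  have h2 : (s14st G π).2 = (s14st G σ).2 := congrArg Prod.snd h
  refine Prod.ext ?_ ?_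
  · simp [s14st, List.getLast?_concat]
  · funext i j u' e
    refine propext ?_
    rw [s14_st_snoc_iff G hπ w, s14_st_snoc_iff G hσ w, h2]

lemma s14_playPrefix_succ (f : ℕ → V) (t : ℕ) :
    playPrefix f (t + 1) = playPrefix f t ++ [f (t + 1)] := by
  unfold GameGraph.playPrefix
  rw [List.range_succ, List.map_append]
  rfl

lemma s14_playPrefix_ne_nil (f : ℕ → V) (t : ℕ) : playPrefix f t ≠ [] := by
  unfold GameGraph.playPrefix
  simp [List.range_succ]

lemma s14_playPrefix_getLast (f : ℕ → V) (t : ℕ) :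
    (playPrefix f t).getLast? = some (f t) := by
  unfold GameGraph.playPrefix
  rw [List.range_succ, List.map_append, show List.map f [t] = [f t] from rfl,
    List.getLast?_concat]

lemma s14_play_step {G : GameGraph n V A B} {f : ℕ → V} (hf : G.IsPlay f) (t : ℕ) :
    G.step (f t) (f (t + 1)) := by
  have h := hf (t + 1)
  rw [s14_playPrefix_succ] at h
  obtain ⟨_, v, hv, hst⟩ := (s14_hist_snoc G (s14_playPrefix_ne_nil f t) _).mp h
  rw [s14_playPrefix_getLast] at hv
  cases hv
  exact hst

/-- The pumping "lift" function. -/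
def s14lift (a b : ℕ) : ℕ → ℕ
  | 0 => 0
  | m + 1 => if s14lift a b m = b then a + 1 else s14lift a b m + 1

lemma s14lift_le (a b : ℕ) (hab : a < b) (m : ℕ) :
    (m ≤ a → s14lift a b m = m) ∧ (a ≤ m → a ≤ s14lift a b m ∧ s14lift a b m ≤ b) := by
  induction m with
  | zero =>
    have h0 : s14lift a b 0 = 0 := rfl
    rw [h0]
    omega
  | succ m ih =>
    rw [s14lift]
    by_cases hb : s14lift a b m = b
    · rw [if_pos hb]; omega
    · rw [if_neg hb]; omega

lemma s14lift_step (a b : ℕ) (m : ℕ) :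
    (s14lift a b (m + 1) = s14lift a b m + 1 ∧ s14lift a b m ≠ b) ∨
    (s14lift a b (m + 1) = a + 1 ∧ s14lift a b m = b) := by
  rw [s14lift]
  by_cases hb : s14lift a b m = b
  · right; simp [hb]
  · left; simp [hb]

lemma s14_main {n : ℕ} {V : Type} {A B : Fin n → Type} [Fintype V]
    {G : GameGraph n V A B} (hrec : G.RecurringHI) {f : ℕ → V} (hf : G.IsPlay f)
    {t ℓ : ℕ} (hgap : G.IsGap f t ℓ) {a b : ℕ} (hta : t ≤ a) (hab : a < b)
    (hb : b ≤ t + ℓ)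
    (hst : s14st G (playPrefix f a) = s14st G (playPrefix f b)) : False := by
  set g : ℕ → V := fun m => f (s14lift a b m) with hg
  have key : ∀ m, s14st G (playPrefix g m) = s14st G (playPrefix f (s14lift a b m)) ∧
      G.IsHistory (playPrefix g m) := by
    intro m
    induction m with
    | zero =>
      have h0 : playPrefix g 0 = playPrefix f 0 := by
        simp [GameGraph.playPrefix, hg, s14lift]
      have hl0 : s14lift a b 0 = 0 := rfl
      rw [h0, hl0]
      exact ⟨rfl, hf 0⟩
    | succ m ih =>
      obtain ⟨ihst, ihh⟩ := ih
      have hsnoc : playPrefix g (m + 1) = playPrefix g m ++ [f (s14lift a b (m + 1))] :=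
        s14_playPrefix_succ g m
      rcases s14lift_step a b m with ⟨hstep, hnb⟩ | ⟨hstep, hbm⟩
      · have hglast : (playPrefix g m).getLast? = some (f (s14lift a b m)) := by
          have h1 := congrArg Prod.fst ihst
          simpa [s14st, s14_playPrefix_getLast] using h1
        constructor
        · rw [hsnoc, hstep, s14_playPrefix_succ f (s14lift a b m)]
          exact s14_st_snoc G (s14_playPrefix_ne_nil g m) (s14_playPrefix_ne_nil f _) ihst _
        · rw [hsnoc]
          refine (s14_hist_snoc G (s14_playPrefix_ne_nil g m) _).mpr
            ⟨ihh, f (s14lift a b m), hglast, ?_⟩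
          rw [hstep]
          exact s14_play_step hf (s14lift a b m)
      · have ihst' : s14st G (playPrefix g m) = s14st G (playPrefix f a) := by
          rw [ihst, hbm, ← hst]
        have hglast : (playPrefix g m).getLast? = some (f a) := by
          have h1 := congrArg Prod.fst ihst'
          simpa [s14st, s14_playPrefix_getLast] using h1
        constructor
        · rw [hsnoc, hstep, s14_playPrefix_succ f a]
          exact s14_st_snoc G (s14_playPrefix_ne_nil g m) (s14_playPrefix_ne_nil f a) ihst' _
        · rw [hsnoc]
          refine (s14_hist_snoc G (s14_playPrefix_ne_nil g m) _).mpr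
            ⟨ihh, f a, hglast, ?_⟩
          rw [hstep]
          exact s14_play_step hf a
  have hplay : G.IsPlay g := fun m => (key m).2
  obtain ⟨t', htt', hHI⟩ := hrec g hplay t
  have hl := s14lift_le a b hab t'
  have hrange : t ≤ s14lift a b t' ∧ s14lift a b t' ≤ t + ℓ := by
    by_cases h : t' ≤ a
    · rw [hl.1 h]; omega
    · have h2 := hl.2 (by omega)
      omega
  have hHIf : G.HistHI (playPrefix f (s14lift a b t')) := by
    rw [s14_histHI_iff] at hHI ⊢
    rw [← (key t').1]
    exact hHI
  exact hgap _ hrange.1 hrange.2 hHIf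


end Statement14Aux

/-- A finite game graph yields recurring hierarchical information iff it
has finite gap size, i.e., there is a uniform bound `k` on the lengths of gaps of its plays. -/
theorem statement14 {n : ℕ} {V : Type} {A B : Fin n → Type}
    [Fintype V] [∀ i, Fintype (A i)] [∀ i, Fintype (B i)]
    (G : GameGraph n V A B) :
    G.RecurringHI ↔ ∃ k : ℕ, ∀ f, G.IsPlay f → ∀ t ℓ, G.IsGap f t ℓ → ℓ + 1 ≤ k := by
  constructor
  · intro hrec
    refine ⟨Nat.card (S14State n V), ?_⟩
    intro f hf t ℓ hgap
    by_contra hk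
    push_neg at hk
    set N := Nat.card (S14State n V) with hN
    have hNℓ : N ≤ ℓ := by omega
    have hninj : ¬ Function.Injective
        (fun r : Fin (N + 1) => s14st G (GameGraph.playPrefix f (t + (r : ℕ)))) := by
      intro hinj
      have hle := Nat.card_le_card_of_injective _ hinj
      rw [Nat.card_eq_fintype_card, Fintype.card_fin] at hle
      omega
    obtain ⟨r1, r2, heq, hne⟩ := Function.not_injective_iff.mp hninj
    have heq' : s14st G (GameGraph.playPrefix f (t + (r1 : ℕ))) =
        s14st G (GameGraph.playPrefix f (t + (r2 : ℕ))) := heq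
    rcases hne.lt_or_gt with hlt | hlt
    · have hlt' : (r1 : ℕ) < (r2 : ℕ) := hlt
      exact s14_main hrec hf hgap (Nat.le_add_right t r1) (by omega)
        (by have := r2.isLt; omega) heq'
    · have hlt' : (r2 : ℕ) < (r1 : ℕ) := hlt
      exact s14_main hrec hf hgap (Nat.le_add_right t r2) (by omega)
        (by have := r1.isLt; omega) heq'.symm
  · rintro ⟨k, hk⟩ f hf T
    by_contra h
    push_neg at h
    have hgap : G.IsGap f T k := fun r hr _ => h r hr
    have := hk f hf T k hgap
    omega
end

section
/- For every m ≥ 1, letting p_1 < p_2 < ⋯ < p_m be the first m prime numbers, there exists a game graph for two players with at most 4 + (p_1 + p_2 + ⋯ + p_m) positions that yields recurring hierarchical information and has a play containing a gap of length at least (p_1 · p_2 ⋯ p_m) − 1; consequently, the gap size of game graphs with recurring hierarchical information can grow exponentially with the number of positions. -/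
namespace S18

open GameGraph

noncomputable def p (k : ℕ) : ℕ := Nat.nth Nat.Prime k

lemma p_prime (k : ℕ) : (p k).Prime := Nat.prime_nth_prime k
lemma p_pos (k : ℕ) : 0 < p k := (p_prime k).pos
lemma p_two_le (k : ℕ) : 2 ≤ p k := (p_prime k).two_le

abbrev V (m : ℕ) := Option (Fin 3 ⊕ (Σ k : Fin m, Fin (p k)))

variable {m : ℕ}

def vinit : V m := none
def vu : V m := some (Sum.inl 0)
def vx : V m := some (Sum.inl 1)
def vy : V m := some (Sum.inl 2)
noncomputable def vc (k : Fin m) (j : ℕ) : V m :=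
  some (Sum.inr ⟨k, ⟨j % p k, Nat.mod_lt _ (p_pos k)⟩⟩)

lemma vc_eq_vc {k k' : Fin m} {j j' : ℕ} :
    vc k j = vc k' j' ↔ k = k' ∧ j % p k = j' % p k' := by
  constructor
  · intro h
    simp only [vc, Option.some_inj, Sum.inr.injEq, Sigma.mk.inj_iff] at h
    obtain ⟨hk, hj⟩ := h
    subst hk
    exact ⟨rfl, by simpa [Fin.ext_iff] using eq_of_heq hj⟩
  · rintro ⟨rfl, hj⟩
    simp [vc, Fin.ext_iff, hj]

lemma vc_congr {k : Fin m} {j j' : ℕ} (h : j % p k = j' % p k) : vc k j = vc k j' :=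
  vc_eq_vc.2 ⟨rfl, h⟩

@[simp] lemma vinit_ne_vc {k : Fin m} {j : ℕ} : (vinit : V m) ≠ vc k j := by simp [vinit, vc]
@[simp] lemma vc_ne_vinit {k : Fin m} {j : ℕ} : (vc k j : V m) ≠ vinit := by simp [vinit, vc]
@[simp] lemma vx_ne_vc {k : Fin m} {j : ℕ} : (vx : V m) ≠ vc k j := by simp [vx, vc]
@[simp] lemma vu_ne_vc {k : Fin m} {j : ℕ} : (vu : V m) ≠ vc k j := by simp [vu, vc]
@[simp] lemma vy_ne_vc {k : Fin m} {j : ℕ} : (vy : V m) ≠ vc k j := by simp [vy, vc]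
@[simp] lemma vc_ne_vx {k : Fin m} {j : ℕ} : (vc k j : V m) ≠ vx := by simp [vx, vc]
@[simp] lemma vc_ne_vu {k : Fin m} {j : ℕ} : (vc k j : V m) ≠ vu := by simp [vu, vc]
@[simp] lemma vc_ne_vy {k : Fin m} {j : ℕ} : (vc k j : V m) ≠ vy := by simp [vy, vc]
@[simp] lemma vx_ne_vinit : (vx : V m) ≠ vinit := by simp [vx, vinit]
@[simp] lemma vu_ne_vinit : (vu : V m) ≠ vinit := by simp [vu, vinit]
@[simp] lemma vy_ne_vinit : (vy : V m) ≠ vinit := by simp [vy, vinit]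
@[simp] lemma vx_ne_vu : (vx : V m) ≠ vu := by simp [vx, vu]
@[simp] lemma vx_ne_vy : (vx : V m) ≠ vy := by simp [vx, vy]
@[simp] lemma vu_ne_vy : (vu : V m) ≠ vy := by simp [vu, vy]
@[simp] lemma vu_ne_vx : (vu : V m) ≠ vx := by simp [vu, vx]
@[simp] lemma vy_ne_vx : (vy : V m) ≠ vx := by simp [vy, vx]
@[simp] lemma vy_ne_vu : (vy : V m) ≠ vu := by simp [vy, vu]
@[simp] lemma vinit_ne_vx : (vinit : V m) ≠ vx := by simp [vx, vinit]
@[simp] lemma vinit_ne_vu : (vinit : V m) ≠ vu := by simp [vu, vinit]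
@[simp] lemma vinit_ne_vy : (vinit : V m) ≠ vy := by simp [vy, vinit]

/-- The move relation. -/
def E : V m → V m → Prop := fun v w =>
  (∃ k : Fin m, v = vinit ∧ w = vc k 0) ∨
  (∃ (k : Fin m) (j : ℕ), v = vc k j ∧ w = vc k (j + 1)) ∨
  (∃ (k : Fin m) (j : ℕ), ¬ p k ∣ (j + 2) ∧ v = vc k j ∧ (w = vx ∨ w = vu)) ∨
  (v = vx ∧ w = vy) ∨ (v = vu ∧ w = vy) ∨ (v = vy ∧ w = vx)

lemma dvd_congr_add {a b n c : ℕ} (h : a % n = b % n) : n ∣ (a + c) ↔ n ∣ (b + c) := by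
  rw [Nat.dvd_iff_mod_eq_zero, Nat.dvd_iff_mod_eq_zero, Nat.add_mod a, Nat.add_mod b, h]

lemma E_init_iff {w : V m} : E vinit w ↔ ∃ k, w = vc k 0 := by
  constructor
  · rintro (⟨k, h1, h2⟩ | ⟨k, j, h1, h2⟩ | ⟨k, j, hd, h1, h2⟩ | ⟨h1, h2⟩ | ⟨h1, h2⟩ | ⟨h1, h2⟩) <;>
      first
      | exact ⟨k, h2⟩
      | exact absurd h1 (by simp)
  · rintro ⟨k, rfl⟩
    exact Or.inl ⟨k, rfl, rfl⟩

lemma E_vc_iff {k : Fin m} {j : ℕ} {w : V m} :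
    E (vc k j) w ↔ w = vc k (j + 1) ∨ (¬ p k ∣ (j + 2) ∧ (w = vx ∨ w = vu)) := by
  constructor
  · rintro (⟨k', h1, h2⟩ | ⟨k', j', h1, h2⟩ | ⟨k', j', hd, h1, h2⟩ | ⟨h1, h2⟩ | ⟨h1, h2⟩ | ⟨h1, h2⟩)
    · exact absurd h1 (by simp)
    · obtain ⟨rfl, hj⟩ := vc_eq_vc.1 h1
      left
      rw [h2]
      exact vc_congr (by rw [Nat.add_mod j', Nat.add_mod j, hj])
    · obtain ⟨rfl, hj⟩ := vc_eq_vc.1 h1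
      right
      exact ⟨by rw [dvd_congr_add hj]; exact hd, h2⟩
    · exact absurd h1 (by simp)
    · exact absurd h1 (by simp)
    · exact absurd h1 (by simp)
  · rintro (rfl | ⟨hd, hw⟩)
    · exact Or.inr (Or.inl ⟨k, j, rfl, rfl⟩)
    · exact Or.inr (Or.inr (Or.inl ⟨k, j, hd, rfl, hw⟩))

lemma E_x_iff {w : V m} : E vx w ↔ w = vy := by
  constructor
  · rintro (⟨k, h1, h2⟩ | ⟨k, j, h1, h2⟩ | ⟨k, j, hd, h1, h2⟩ | ⟨h1, h2⟩ | ⟨h1, h2⟩ | ⟨h1, h2⟩) <;>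
      first
      | exact h2
      | exact absurd h1 (by simp)
  · rintro rfl
    exact Or.inr (Or.inr (Or.inr (Or.inl ⟨rfl, rfl⟩)))

lemma E_u_iff {w : V m} : E vu w ↔ w = vy := by
  constructor
  · rintro (⟨k, h1, h2⟩ | ⟨k, j, h1, h2⟩ | ⟨k, j, hd, h1, h2⟩ | ⟨h1, h2⟩ | ⟨h1, h2⟩ | ⟨h1, h2⟩) <;>
      first
      | exact h2
      | exact absurd h1 (by simp)
  · rintro rfl
    exact Or.inr (Or.inr (Or.inr (Or.inr (Or.inl ⟨rfl, rfl⟩))))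

lemma E_y_iff {w : V m} : E vy w ↔ w = vx := by
  constructor
  · rintro (⟨k, h1, h2⟩ | ⟨k, j, h1, h2⟩ | ⟨k, j, hd, h1, h2⟩ | ⟨h1, h2⟩ | ⟨h1, h2⟩ | ⟨h1, h2⟩) <;>
      first
      | exact h2
      | exact absurd h1 (by simp)
  · rintro rfl
    exact Or.inr (Or.inr (Or.inr (Or.inr (Or.inr ⟨rfl, rfl⟩))))

def obs0 : V m → Fin 3
  | some (Sum.inl i) => if i = 1 then 0 else 1
  | _ => 0

def obs1 : V m → Fin 3
  | some (Sum.inl i) => if i = 1 then 1 else if i = 2 then 2 else 0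
  | _ => 0

@[simp] lemma obs0_vinit : obs0 (vinit : V m) = 0 := rfl
@[simp] lemma obs0_vu : obs0 (vu : V m) = 1 := rfl
@[simp] lemma obs0_vx : obs0 (vx : V m) = 0 := rfl
@[simp] lemma obs0_vy : obs0 (vy : V m) = 1 := rfl
@[simp] lemma obs0_vc {k : Fin m} {j : ℕ} : obs0 (vc k j : V m) = 0 := rfl
@[simp] lemma obs1_vinit : obs1 (vinit : V m) = 0 := rfl
@[simp] lemma obs1_vu : obs1 (vu : V m) = 0 := rfl
@[simp] lemma obs1_vx : obs1 (vx : V m) = 1 := rfl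
@[simp] lemma obs1_vy : obs1 (vy : V m) = 2 := rfl
@[simp] lemma obs1_vc {k : Fin m} {j : ℕ} : obs1 (vc k j : V m) = 0 := rfl

/-- The game graph. -/
noncomputable def G (m : ℕ) (hm : 0 < m) : GameGraph 2 (V m) (fun _ => Unit) (fun _ => Fin 3) where
  init := vinit
  move v _ w := E v w
  obs i v := if (i : ℕ) = 0 then obs0 v else obs1 v
  noDeadEnd := by
    intro v _
    match v with
    | none => exact ⟨vc ⟨0, hm⟩ 0, Or.inl ⟨⟨0, hm⟩, rfl, rfl⟩⟩
    | some (Sum.inl i) =>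
      by_cases h1 : i = 1
      · subst h1; exact ⟨vy, Or.inr (Or.inr (Or.inr (Or.inl ⟨rfl, rfl⟩)))⟩
      · by_cases h2 : i = 2
        · subst h2; exact ⟨vx, Or.inr (Or.inr (Or.inr (Or.inr (Or.inr ⟨rfl, rfl⟩))))⟩
        · have h0 : i = 0 := by omega
          subst h0; exact ⟨vy, Or.inr (Or.inr (Or.inr (Or.inr (Or.inl ⟨rfl, rfl⟩))))⟩
    | some (Sum.inr ⟨k, j⟩) =>
      refine ⟨vc k ((j : ℕ) + 1), Or.inr (Or.inl ⟨k, (j : ℕ), ?_, rfl⟩)⟩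
      simp [vc, Fin.ext_iff, Nat.mod_eq_of_lt j.isLt]

variable {hm : 0 < m}

lemma step_iff {v w : V m} : (G m hm).step v w ↔ E v w :=
  ⟨fun ⟨_, h⟩ => h, fun h => ⟨fun _ => (), h⟩⟩

lemma obsG_zero : (G m hm).obs 0 = obs0 := by funext v; rfl
lemma obsG_one : (G m hm).obs 1 = obs1 := by funext v; rfl

lemma chain'_iff (R : V m → V m → Prop) (g : ℕ → V m) (r : ℕ) :
    List.Chain' R ((List.range (r + 1)).map g) ↔ ∀ τ < r, R (g τ) (g (τ + 1)) := by
  rw [show List.Chain' R _ ↔ List.IsChain R _ from Iff.rfl, List.isChain_map]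
  exact List.isChain_range_succ _ r

lemma hist_iff (g : ℕ → V m) (r : ℕ) :
    (G m hm).IsHistory (GameGraph.playPrefix g r) ↔
      g 0 = vinit ∧ ∀ τ < r, E (g τ) (g (τ + 1)) := by
  rw [GameGraph.IsHistory, GameGraph.playPrefix]
  have hh : ((List.range (r + 1)).map g).head? = some (g 0) := by
    rw [List.range_succ_eq_map]; rfl
  rw [hh, chain'_iff]
  constructor
  · rintro ⟨h1, h2⟩
    refine ⟨by simpa [G] using h1, fun τ hτ => step_iff.1 (h2 τ hτ)⟩
  · rintro ⟨h1, h2⟩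
    exact ⟨by simpa [G] using h1, fun τ hτ => step_iff.2 (h2 τ hτ)⟩

lemma obsSeq_playPrefix (i : Fin 2) (g : ℕ → V m) (r : ℕ) :
    (G m hm).obsSeq i (GameGraph.playPrefix g r) =
      (List.range r).map (fun τ => (G m hm).obs i (g (τ + 1))) := by
  rw [GameGraph.obsSeq, GameGraph.playPrefix, List.range_succ_eq_map]
  simp [List.map_map, Function.comp_def]

lemma indist_iff (i : Fin 2) (g g' : ℕ → V m) (r : ℕ) :
    (G m hm).Indist i (GameGraph.playPrefix g r) (GameGraph.playPrefix g' r) ↔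
      ∀ τ, 1 ≤ τ → τ ≤ r → (G m hm).obs i (g τ) = (G m hm).obs i (g' τ) := by
  rw [GameGraph.Indist, obsSeq_playPrefix, obsSeq_playPrefix, List.map_eq_map_iff]
  constructor
  · intro h τ h1 h2
    have := h (τ - 1) (by simp [List.mem_range]; omega)
    simpa [Nat.sub_add_cancel h1] using this
  · intro h τ hτ
    simp only [List.mem_range] at hτ
    exact h (τ + 1) (by omega) (by omega)

lemma hist_fun {h : List (V m)} (H : (G m hm).IsHistory h) :
    ∃ (g : ℕ → V m), h = GameGraph.playPrefix g (h.length - 1) := by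
  have hne : h ≠ [] := by
    intro e
    rw [GameGraph.IsHistory, e] at H
    exact absurd H.1 (by simp)
  have hlen : 1 ≤ h.length := List.length_pos_iff.2 hne
  refine ⟨fun τ => h.getD τ vinit, ?_⟩
  apply List.ext_getElem
  · simp [GameGraph.playPrefix]; omega
  · intro i h1 h2
    simp only [GameGraph.playPrefix, List.getElem_map, List.getElem_range,
      List.getD_eq_getElem?_getD]
    rw [List.getElem?_eq_getElem h1]
    rfl

lemma playPrefix_length (g : ℕ → V m) (r : ℕ) : (GameGraph.playPrefix g r).length = r + 1 := by
  simp [GameGraph.playPrefix]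

def PureTo (g : ℕ → V m) (k : Fin m) (r : ℕ) : Prop :=
  ∀ τ, 1 ≤ τ → τ ≤ r → g τ = vc k (τ - 1)

def GadAt (g : ℕ → V m) (k : Fin m) (t : ℕ) (w : V m) (r : ℕ) : Prop :=
  2 ≤ t ∧ t ≤ r ∧ ¬ p k ∣ t ∧ (w = vx ∨ w = vu) ∧
  (∀ τ, 1 ≤ τ → τ < t → g τ = vc k (τ - 1)) ∧ g t = w ∧
  (∀ τ, t < τ → τ ≤ r → g τ = if (τ - t) % 2 = 1 then vy else vx)

theorem classify (hm : 0 < m) (g : ℕ → V m) (r : ℕ) (h0 : g 0 = vinit)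
    (hc : ∀ τ < r, E (g τ) (g (τ + 1))) :
    (∃ k, PureTo g k r) ∨ (∃ k t w, GadAt g k t w r) := by
  induction r with
  | zero =>
    exact Or.inl ⟨⟨0, hm⟩, fun τ h1 h2 => absurd h2 (by omega)⟩
  | succ r ih =>
    rcases ih (fun τ hτ => hc τ (by omega)) with ⟨k, hp⟩ | ⟨k, t, w, hg⟩
    · have he := hc r (by omega)
      rcases Nat.eq_zero_or_pos r with rfl | hr
      · rw [h0, E_init_iff] at he
        obtain ⟨k', hw⟩ := he
        refine Or.inl ⟨k', fun τ h1 h2 => ?_⟩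
        have hτ : τ = 1 := by omega
        subst hτ
        simpa using hw
      · rw [hp r hr le_rfl, E_vc_iff] at he
        rcases he with hw | ⟨hd, hw⟩
        · refine Or.inl ⟨k, fun τ h1 h2 => ?_⟩
          rcases eq_or_lt_of_le h2 with hEq | hlt
          · subst hEq
            have hrr : r - 1 + 1 = r := by omega
            rw [hrr] at hw
            simpa using hw
          · exact hp τ h1 (by omega)
        · right
          have hdd : ¬ p k ∣ (r + 1) := by
            have hrr : r - 1 + 2 = r + 1 := by omega
            rwa [hrr] at hd
          exact ⟨k, r + 1, g (r + 1), by omega, le_rfl, hdd, hw,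
            fun τ h1 h2 => hp τ h1 (by omega), rfl,
            fun τ h1 h2 => absurd h1 (by omega)⟩
    · obtain ⟨h2t, htr, hdvd, hw, hpre, hgt, htail⟩ := hg
      right
      refine ⟨k, t, w, h2t, by omega, hdvd, hw, hpre, hgt, fun τ h1 h2 => ?_⟩
      rcases eq_or_lt_of_le h2 with hEq | hlt
      · subst hEq
        have he := hc r (by omega)
        rcases Nat.lt_or_ge t r with hter | hter
        · have hgr := htail r hter le_rfl
          by_cases hpar : (r - t) % 2 = 1
          · rw [if_pos hpar] at hgr
            rw [hgr, E_y_iff] at he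
            rw [he, if_neg (by omega)]
          · rw [if_neg hpar] at hgr
            rw [hgr, E_x_iff] at he
            rw [he, if_pos (by omega)]
        · have hEqt : t = r := by omega
          subst hEqt
          rcases hw with hww | hww <;> rw [hgt, hww] at he
          · rw [E_x_iff] at he
            rw [he, if_pos (by omega)]
          · rw [E_u_iff] at he
            rw [he, if_pos (by omega)]
      · exact htail τ h1 (by omega)

lemma histHI_of_sub01 {π : List (V m)} (h : (G m hm).InfoSet 0 π ⊆ (G m hm).InfoSet 1 π) :
    (G m hm).HistHI π := by
  intro i j
  fin_cases i <;> fin_cases j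
  · exact Or.inl subset_rfl
  · exact Or.inl h
  · exact Or.inr h
  · exact Or.inl subset_rfl

lemma histHI_of_sub10 {π : List (V m)} (h : (G m hm).InfoSet 1 π ⊆ (G m hm).InfoSet 0 π) :
    (G m hm).HistHI π := by
  intro i j
  fin_cases i <;> fin_cases j
  · exact Or.inl subset_rfl
  · exact Or.inr h
  · exact Or.inl h
  · exact Or.inl subset_rfl

lemma pureHI (g : ℕ → V m) (k : Fin m) (L : ℕ)
    (hp : PureTo g k L) (hN : ∀ k' : Fin m, p (k' : ℕ) ∣ L) :
    (G m hm).HistHI (GameGraph.playPrefix g L) := by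
  apply histHI_of_sub01
  rintro π' ⟨H', ind⟩
  obtain ⟨g', hg'⟩ := hist_fun H'
  rw [hg'] at H' ind ⊢
  have hLr : π'.length - 1 = L := by
    have hl := congrArg List.length ind
    rw [obsSeq_playPrefix, obsSeq_playPrefix] at hl
    simpa using hl.symm
  rw [hLr] at H' ind ⊢
  obtain ⟨h0', hc'⟩ := (hist_iff _ _).1 H'
  have ind0 := (indist_iff 0 g g' L).1 ind
  refine ⟨H', (indist_iff 1 g g' L).2 ?_⟩
  rcases classify hm g' L h0' hc' with ⟨k2, hp2⟩ |
    ⟨k2, t2, w2, h2t2, ht2L, hdvd2, hw2, hpre2, hgt2, htail2⟩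
  · intro τ h1 h2
    rw [obsG_one, hp τ h1 h2, hp2 τ h1 h2]
    simp
  · exfalso
    rcases hw2 with rfl | rfl
    · rcases eq_or_lt_of_le ht2L with hEq | hlt
      · rw [hEq] at hdvd2
        exact hdvd2 (hN k2)
      · have hy : g' (t2 + 1) = vy := by
          simpa [show t2 + 1 - t2 = 1 by omega] using htail2 (t2 + 1) (by omega) (by omega)
        have hind := ind0 (t2 + 1) (by omega) (by omega)
        rw [obsG_zero, hy, hp (t2 + 1) (by omega) (by omega)] at hind
        simp at hind
    · have hind := ind0 t2 (by omega) (by omega)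
      rw [obsG_zero, hgt2, hp t2 (by omega) (by omega)] at hind
      simp at hind

lemma gadHI (g : ℕ → V m) (k : Fin m) (t : ℕ) (w : V m) (r : ℕ)
    (hg : GadAt g k t w r) (htr : t < r) :
    (G m hm).HistHI (GameGraph.playPrefix g r) := by
  obtain ⟨h2t, _, hdvd, hw, hpre, hgt, htail⟩ := hg
  apply histHI_of_sub10
  rintro π' ⟨H', ind⟩
  obtain ⟨g', hg'⟩ := hist_fun H'
  rw [hg'] at H' ind ⊢
  have hLr : π'.length - 1 = r := by
    have hl := congrArg List.length ind
    rw [obsSeq_playPrefix, obsSeq_playPrefix] at hl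
    simpa using hl.symm
  rw [hLr] at H' ind ⊢
  obtain ⟨h0', hc'⟩ := (hist_iff _ _).1 H'
  have ind1 := (indist_iff 1 g g' r).1 ind
  refine ⟨H', (indist_iff 0 g g' r).2 ?_⟩
  rcases classify hm g' r h0' hc' with ⟨k2, hp2⟩ |
    ⟨k2, t2, w2, h2t2, ht2r, hdvd2, hw2, hpre2, hgt2, htail2⟩
  · exfalso
    rcases hw with rfl | rfl
    · have hind := ind1 t (by omega) (by omega)
      rw [obsG_one, hgt, hp2 t (by omega) (by omega)] at hind
      simp at hind
    · have hgy : g (t + 1) = vy := by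
        simpa [show t + 1 - t = 1 by omega] using htail (t + 1) (by omega) (by omega)
      have hind := ind1 (t + 1) (by omega) (by omega)
      rw [obsG_one, hgy, hp2 (t + 1) (by omega) (by omega)] at hind
      simp at hind
  · have hy2 : t2 < r → g' (t2 + 1) = vy := fun h => by
      simpa [show t2 + 1 - t2 = 1 by omega] using htail2 (t2 + 1) (by omega) (by omega)
    have hy1 : g (t + 1) = vy := by
      simpa [show t + 1 - t = 1 by omega] using htail (t + 1) (by omega) (by omega)
    have key : t2 = t ∧ w2 = w := by
      rcases hw with rfl | rfl <;> rcases hw2 with rfl | rfl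
      · -- w = vx, w2 = vx
        rcases lt_trichotomy t2 t with hlt | hEq | hgtt
        · exfalso
          have hind := ind1 t2 (by omega) (by omega)
          rw [obsG_one, hgt2, hpre t2 (by omega) hlt] at hind
          simp at hind
        · exact ⟨hEq, rfl⟩
        · exfalso
          have hind := ind1 t (by omega) (by omega)
          rw [obsG_one, hgt, hpre2 t (by omega) hgtt] at hind
          simp at hind
      · -- w = vx, w2 = vu : impossible
        exfalso
        rcases lt_trichotomy t2 t with hlt | hEq | hgtt
        · have hind := ind1 (t2 + 1) (by omega) (by omega)
          rw [obsG_one, hy2 (by omega)] at hind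
          rcases eq_or_lt_of_le (show t2 + 1 ≤ t by omega) with hEq1 | hlt1
          · rw [hEq1, hgt] at hind
            simp at hind
          · rw [hpre (t2 + 1) (by omega) hlt1] at hind
            simp at hind
        · rw [hEq] at hgt2
          have hind := ind1 t (by omega) (by omega)
          rw [obsG_one, hgt, hgt2] at hind
          simp at hind
        · have hind := ind1 t (by omega) (by omega)
          rw [obsG_one, hgt, hpre2 t (by omega) hgtt] at hind
          simp at hind
      · -- w = vu, w2 = vx : impossible
        exfalso
        rcases lt_trichotomy t2 t with hlt | hEq | hgtt
        · have hind := ind1 t2 (by omega) (by omega)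
          rw [obsG_one, hgt2, hpre t2 (by omega) hlt] at hind
          simp at hind
        · rw [hEq] at hgt2
          have hind := ind1 t (by omega) (by omega)
          rw [obsG_one, hgt, hgt2] at hind
          simp at hind
        · have hind := ind1 (t + 1) (by omega) (by omega)
          rw [obsG_one, hy1] at hind
          rcases eq_or_lt_of_le (show t + 1 ≤ t2 by omega) with hEq1 | hlt1
          · rw [hEq1, hgt2] at hind
            simp at hind
          · rw [hpre2 (t + 1) (by omega) hlt1] at hind
            simp at hind
      · -- w = vu, w2 = vu
        rcases lt_trichotomy t2 t with hlt | hEq | hgtt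
        · exfalso
          have hind := ind1 (t2 + 1) (by omega) (by omega)
          rw [obsG_one, hy2 (by omega)] at hind
          rcases eq_or_lt_of_le (show t2 + 1 ≤ t by omega) with hEq1 | hlt1
          · rw [hEq1, hgt] at hind
            simp at hind
          · rw [hpre (t2 + 1) (by omega) hlt1] at hind
            simp at hind
        · exact ⟨hEq, rfl⟩
        · exfalso
          have hind := ind1 (t + 1) (by omega) (by omega)
          rw [obsG_one, hy1] at hind
          rcases eq_or_lt_of_le (show t + 1 ≤ t2 by omega) with hEq1 | hlt1
          · rw [hEq1, hgt2] at hind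
            simp at hind
          · rw [hpre2 (t + 1) (by omega) hlt1] at hind
            simp at hind
    obtain ⟨rfl, rfl⟩ := key
    intro τ h1 h2
    rw [obsG_zero]
    rcases lt_trichotomy τ t2 with hlt | hEq | hgtt
    · rw [hpre τ h1 hlt, hpre2 τ h1 hlt]
      simp
    · rw [hEq, hgt, hgt2]
    · rw [htail τ hgtt h2, htail2 τ hgtt h2]

noncomputable def N (m : ℕ) : ℕ := ∏ k ∈ Finset.range m, p k

lemma N_pos : 0 < N m := Finset.prod_pos (fun k _ => p_pos k)

lemma p_dvd_N {k : ℕ} (hk : k < m) : p k ∣ N m :=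
  Finset.dvd_prod_of_mem _ (Finset.mem_range.2 hk)

lemma two_le_N (hm : 0 < m) : 2 ≤ N m :=
  le_trans (p_two_le 0) (Nat.le_of_dvd N_pos (p_dvd_N hm))

lemma N_dvd_of_forall {L : ℕ} (h : ∀ k < m, p k ∣ L) : N m ∣ L := by
  have hinj : ∀ x ∈ Finset.range m, ∀ y ∈ Finset.range m, p x = p y → x = y := by
    intro x _ y _ hxy
    rcases lt_trichotomy x y with hl | hl | hl
    · exact absurd hxy (Nat.ne_of_lt ((Nat.nth_lt_nth Nat.infinite_setOf_prime).2 hl))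
    · exact hl
    · exact absurd hxy.symm (Nat.ne_of_lt ((Nat.nth_lt_nth Nat.infinite_setOf_prime).2 hl))
  have hprod := Finset.prod_primes_dvd (s := (Finset.range m).image (fun k => p k)) L
    (fun q hq => by
      simp only [Finset.mem_image, Finset.mem_range] at hq
      obtain ⟨k, _, rfl⟩ := hq
      exact (p_prime k).prime)
    (fun q hq => by
      simp only [Finset.mem_image, Finset.mem_range] at hq
      obtain ⟨k, hk, rfl⟩ := hq
      exact h k hk)
  rwa [Finset.prod_image hinj] at hprod

/-- The main (blank) play: stays in cycle 0 forever. -/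
noncomputable def fplay (hm : 0 < m) : ℕ → V m :=
  fun τ => if τ = 0 then vinit else vc ⟨0, hm⟩ (τ - 1)

lemma fplay_zero : fplay hm 0 = vinit := rfl

lemma fplay_pos {τ : ℕ} (h : 1 ≤ τ) : fplay hm τ = vc ⟨0, hm⟩ (τ - 1) := by
  have h0 : τ ≠ 0 := by omega
  simp [fplay, h0]

lemma fplay_hist (r : ℕ) : (G m hm).IsHistory (GameGraph.playPrefix (fplay hm) r) := by
  rw [hist_iff]
  refine ⟨rfl, fun τ hτ => ?_⟩
  rcases Nat.eq_zero_or_pos τ with rfl | h1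
  · rw [fplay_zero, fplay_pos (by omega)]
    exact E_init_iff.2 ⟨⟨0, hm⟩, rfl⟩
  · rw [fplay_pos h1, fplay_pos (by omega)]
    refine E_vc_iff.2 (Or.inl ?_)
    exact congrArg (vc ⟨0, hm⟩) (by omega)

lemma fplay_isPlay : (G m hm).IsPlay (fplay hm) := fun r => fplay_hist r

lemma fplay_pure (r : ℕ) : PureTo (fplay hm) ⟨0, hm⟩ r :=
  fun τ h1 _ => fplay_pos h1

/-- Witness histories: run in cycle `k`, then jump to `w` at time exactly `r`. -/
noncomputable def gwit (hm : 0 < m) (k : Fin m) (r : ℕ) (w : V m) : ℕ → V m :=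
  fun τ => if τ = 0 then vinit else if τ < r then vc k (τ - 1) else w

lemma gwit_zero {k r w} : gwit hm k r w 0 = vinit := rfl

lemma gwit_mid {k r w} {τ : ℕ} (h1 : 1 ≤ τ) (h2 : τ < r) : gwit hm k r w τ = vc k (τ - 1) := by
  have h0 : τ ≠ 0 := by omega
  simp [gwit, h0, h2]

lemma gwit_end {k r w} {τ : ℕ} (h1 : 1 ≤ τ) (h2 : r ≤ τ) : gwit hm k r w τ = w := by
  have h0 : τ ≠ 0 := by omega
  have h3 : ¬ τ < r := by omega
  simp [gwit, h0, h3]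

lemma gwit_hist {k : Fin m} {r : ℕ} {w : V m} (hr2 : 2 ≤ r) (hk : ¬ p (k : ℕ) ∣ r)
    (hw : w = vx ∨ w = vu) : (G m hm).IsHistory (GameGraph.playPrefix (gwit hm k r w) r) := by
  rw [hist_iff]
  refine ⟨rfl, fun τ hτ => ?_⟩
  rcases Nat.eq_zero_or_pos τ with rfl | h1
  · rw [gwit_zero, gwit_mid (by omega) (by omega)]
    exact E_init_iff.2 ⟨k, rfl⟩
  · rw [gwit_mid h1 (by omega)]
    rcases lt_or_ge (τ + 1) r with h | h
    · rw [gwit_mid (by omega) h]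
      exact E_vc_iff.2 (Or.inl (congrArg (vc k) (by omega)))
    · rw [gwit_end (by omega) h]
      refine E_vc_iff.2 (Or.inr ⟨?_, hw⟩)
      have : τ - 1 + 2 = r := by omega
      rwa [this]

lemma notHI_at (k : Fin m) (r : ℕ) (hr2 : 2 ≤ r) (hk : ¬ p (k : ℕ) ∣ r) :
    ¬ (G m hm).HistHI (GameGraph.playPrefix (fplay hm) r) := by
  intro hHI
  rcases hHI 0 1 with hsub | hsub
  · have hmem : GameGraph.playPrefix (gwit hm k r vx) r ∈
        (G m hm).InfoSet 0 (GameGraph.playPrefix (fplay hm) r) := by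
      refine ⟨gwit_hist hr2 hk (Or.inl rfl), (indist_iff 0 _ _ r).2 ?_⟩
      intro τ h1 h2
      rw [obsG_zero, fplay_pos h1]
      rcases lt_or_ge τ r with h | h
      · rw [gwit_mid h1 h]
        simp
      · rw [gwit_end h1 h]
        simp
    have h2 := (hsub hmem).2
    have h3 := (indist_iff 1 _ _ r).1 h2 r (by omega) le_rfl
    rw [obsG_one, fplay_pos (by omega), gwit_end (by omega) le_rfl] at h3
    simp at h3
  · have hmem : GameGraph.playPrefix (gwit hm k r vu) r ∈
        (G m hm).InfoSet 1 (GameGraph.playPrefix (fplay hm) r) := by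
      refine ⟨gwit_hist hr2 hk (Or.inr rfl), (indist_iff 1 _ _ r).2 ?_⟩
      intro τ h1 h2
      rw [obsG_one, fplay_pos h1]
      rcases lt_or_ge τ r with h | h
      · rw [gwit_mid h1 h]
        simp
      · rw [gwit_end h1 h]
        simp
    have h2 := (hsub hmem).2
    have h3 := (indist_iff 0 _ _ r).1 h2 r (by omega) le_rfl
    rw [obsG_zero, fplay_pos (by omega), gwit_end (by omega) le_rfl] at h3
    simp at h3

lemma recurring : (G m hm).RecurringHI := by
  intro g hplay T
  have h0 : g 0 = vinit := ((hist_iff g 0).1 (hplay 0)).1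
  have hc : ∀ τ, E (g τ) (g (τ + 1)) :=
    fun τ => (((hist_iff g (τ + 1)).1 (hplay (τ + 1))).2) τ (by omega)
  have hN2 := two_le_N hm
  have hL2 : 2 ≤ N m * (T + 1) := le_trans hN2 (Nat.le_mul_of_pos_right _ (by omega))
  have hTL : T < N m * (T + 1) := by
    calc T < T + 1 := by omega
    _ = 1 * (T + 1) := by omega
    _ ≤ N m * (T + 1) := Nat.mul_le_mul_right _ (by omega)
  set L := N m * (T + 1) with hLdef
  have hNdvd : ∀ k' : Fin m, p (k' : ℕ) ∣ L := fun k' =>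
    dvd_mul_of_dvd_left (p_dvd_N k'.isLt) _
  rcases classify hm g L h0 (fun τ _ => hc τ) with ⟨k, hp⟩ | ⟨k, t, w, hg⟩
  · exact ⟨L, by omega, pureHI g k L hp hNdvd⟩
  · have htL := hg.2.1
    have hw := hg.2.2.2.1
    have hgt := hg.2.2.2.2.2.1
    rcases eq_or_lt_of_le htL with hEq | hlt
    · rcases classify hm g (L + 1) h0 (fun τ _ => hc τ) with ⟨k2, hp2⟩ | ⟨k2, t2, w2, hg2⟩
      · exfalso
        have h1 := hp2 L (by omega) (by omega)
        rw [hEq] at hgt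
        rcases hw with hww | hww <;> rw [hww] at hgt <;> rw [h1] at hgt <;>
          exact absurd hgt (by simp)
      · have ht2 : t2 < L + 1 := by
          rcases eq_or_lt_of_le hg2.2.1 with hEq2 | hlt2
          · exfalso
            have h1 := hg2.2.2.2.2.1 L (by omega) (by omega)
            rw [hEq] at hgt
            rcases hw with hww | hww <;> rw [hww] at hgt <;> rw [h1] at hgt <;>
              exact absurd hgt (by simp)
          · omega
        exact ⟨L + 1, by omega, gadHI g k2 t2 w2 (L + 1) hg2 ht2⟩
    · exact ⟨L, by omega, gadHI g k t w L hg hlt⟩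

lemma card_V (m : ℕ) : Fintype.card (V m) = 4 + ∑ k ∈ Finset.range m, Nat.nth Nat.Prime k := by
  have h1 : Fintype.card (V m) = Fintype.card (Fin 3 ⊕ (Σ k : Fin m, Fin (p k))) + 1 :=
    Fintype.card_option
  rw [h1, Fintype.card_sum, Fintype.card_sigma]
  simp only [Fintype.card_fin]
  rw [Fin.sum_univ_eq_sum_range (fun k => p k) m]
  simp only [p]
  omega

end S18

/-- For every `m ≥ 1`, with `p₁ < ⋯ < p_m` the first `m` primes, there is a
two-player game graph with at most `4 + (p₁ + ⋯ + p_m)` positions that yields recurring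
hierarchical information and has a play containing a gap of length at least `p₁ ⋯ p_m − 1`. -/
theorem statement18 (m : ℕ) (hm : 1 ≤ m) :
    ∃ (V : Type) (_ : Fintype V) (A B : Fin 2 → Type)
      (_ : ∀ i, Fintype (A i)) (_ : ∀ i, Fintype (B i))
      (G : GameGraph 2 V A B),
      Fintype.card V ≤ 4 + ∑ k ∈ Finset.range m, Nat.nth Nat.Prime k ∧
      G.RecurringHI ∧
      ∃ f, G.IsPlay f ∧ ∃ t ℓ, G.IsGap f t ℓ ∧
        (∏ k ∈ Finset.range m, Nat.nth Nat.Prime k) - 1 ≤ ℓ + 1 := by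
  have hm' : 0 < m := hm
  have hN2 := S18.two_le_N hm'
  refine ⟨S18.V m, inferInstance, (fun _ => Unit), (fun _ => Fin 3),
    (fun _ => inferInstance), (fun _ => inferInstance), S18.G m hm',
    le_of_eq (S18.card_V m), S18.recurring, ?_⟩
  refine ⟨S18.fplay hm', S18.fplay_isPlay, S18.N m + 1, S18.N m - 2, ?_, ?_⟩
  · intro r hr1 hr2
    have hndvd : ¬ S18.N m ∣ r := by
      intro hdvd
      obtain ⟨c, hc⟩ := hdvd
      have hc2 : 2 ≤ c := by
        by_contra hcc
        push_neg at hcc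
        interval_cases c
        · simp at hc; omega
        · rw [Nat.mul_one] at hc; omega
      have h2 : S18.N m * 2 ≤ r := by
        rw [hc]
        exact Nat.mul_le_mul_left _ hc2
      omega
    obtain ⟨k, hk⟩ : ∃ k : Fin m, ¬ S18.p (k : ℕ) ∣ r := by
      by_contra hall
      push_neg at hall
      exact hndvd (S18.N_dvd_of_forall (fun k hk => hall ⟨k, hk⟩))
    exact S18.notHI_at k r (by omega) hk
  · rw [show (∏ k ∈ Finset.range m, Nat.nth Nat.Prime k) = S18.N m from rfl]
    omega
end
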